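/- Fix α > 0, ρ₀ ∈ ℝ and 0 < r₀ < α/√3, and let R(T,ρ) = r₀(1 − r₀²/α²) + (1 − 3r₀²/α²)(ρ−ρ₀) − [ (T+ρ−ρ₀)³ − (T−ρ+ρ₀)³ ]/(6α²) − r₀[ (T−ρ+ρ₀)² + (T+ρ−ρ₀)² ]/(2α²). Let ψ be a C² function on a neighborhood of the segment { (T,ρ₀) : 0 ≤ T < √(α²−r₀²) } satisfying there the vacuum wave equation ∂ₜₜψ + (∂ₜR/R)∂ₜψ − ∂ᵨᵨψ − (∂ᵨR/R)∂ᵨψ = 0 (derivatives with respect to T and ρ), together with the matching conditions ψ(T,ρ₀) = ln(1 − (T²+r₀²)/α²) and ∂ᵨψ(T,ρ₀) = −(2r₀/α²)·(1 − (T²+r₀²)/α²)^{−1}. Then for every T with 0 ≤ T < √(α²−r₀²): (∂ₜₜψ − ∂ᵨᵨψ + (∂ₜψ)² − (∂ᵨψ)²)(T,ρ₀) = −2/(α² − T² − r₀²). In particular the Weyl scalar Ψ₂ = ½ e^{2(ψ−γ)}(∂ₜₜψ − ∂ᵨᵨψ + (∂ₜψ)² − (∂ᵨψ)²) equals −1/(α²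 − T² − r₀²) on the matching surface (where γ = ψ), which is negative and diverges as T² → α² − r₀². -/

import Mathlib

open Set Filter Topology

lemma deriv_eqOn_Ico_aux {f g g' : ℝ → ℝ} {V W : Set ℝ} (hV : IsOpen V) (hW : IsOpen W)
    {a b : ℝ} (hab : a < b) (hVs : Set.Ico a b ⊆ V) (hWs : Set.Ico a b ⊆ W)
    (hfc : ContinuousOn (deriv f) V)
    (hg : ∀ t ∈ W, HasDerivAt g (g' t) t) (hg'c : ContinuousOn g' W)
    (hfg : ∀ t ∈ Set.Ico a b, f t = g t) :
    ∀ t ∈ Set.Ico a b, deriv f t = g' t := by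
  have hinterior : ∀ t ∈ Set.Ioo a b, deriv f t = g' t := by
    intro t ht
    have hmem : Set.Ioo a b ∈ 𝓝 t := isOpen_Ioo.mem_nhds ht
    have heq : f =ᶠ[𝓝 t] g :=
      Filter.eventuallyEq_of_mem hmem (fun x hx => hfg x (Set.Ioo_subset_Ico_self hx))
    rw [heq.deriv_eq]
    exact (hg t (hWs (Set.Ioo_subset_Ico_self ht))).deriv
  intro t ht
  rcases eq_or_lt_of_le ht.1 with h | h
  · subst h
    have haV : a ∈ V := hVs ⟨le_refl a, hab⟩
    have haW : a ∈ W := hWs ⟨le_refl a, hab⟩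
    have h1 : Tendsto (deriv f) (𝓝[>] a) (𝓝 (deriv f a)) :=
      ((hfc.continuousAt (hV.mem_nhds haV)).tendsto).mono_left nhdsWithin_le_nhds
    have h2 : Tendsto g' (𝓝[>] a) (𝓝 (g' a)) :=
      ((hg'c.continuousAt (hW.mem_nhds haW)).tendsto).mono_left nhdsWithin_le_nhds
    have h3 : deriv f =ᶠ[𝓝[>] a] g' := by
      filter_upwards [Ioo_mem_nhdsGT_of_mem (Set.mem_Ico.mpr ⟨le_refl a, hab⟩)] with x hx
      exact hinterior x hx
    exact tendsto_nhds_unique (h1.congr' h3) h2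
  · exact hinterior t ⟨h, ht.2⟩

theorem weyl_scalar_Psi2_on_boundary
    (α r₀ ρ₀ : ℝ) (hα : 0 < α) (hr₀ : 0 < r₀)
    (R ψ : ℝ → ℝ → ℝ)
    (hR : ∀ T ρ : ℝ, R T ρ = r₀ * (1 - r₀ ^ 2 / α ^ 2)
      + (1 - 3 * r₀ ^ 2 / α ^ 2) * (ρ - ρ₀)
      - ((T + ρ - ρ₀) ^ 3 - (T - ρ + ρ₀) ^ 3) / (6 * α ^ 2)
      - r₀ * ((T - ρ + ρ₀) ^ 2 + (T + ρ - ρ₀) ^ 2) / (2 * α ^ 2))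
    (U : Set (ℝ × ℝ)) (hUopen : IsOpen U)
    (hseg : ∀ T : ℝ, 0 ≤ T → T < Real.sqrt (α ^ 2 - r₀ ^ 2) → (T, ρ₀) ∈ U)
    (hψ : ContDiffOn ℝ 2 (fun p : ℝ × ℝ => ψ p.1 p.2) U)
    (hwave : ∀ p : ℝ × ℝ, p ∈ U →
      deriv (deriv (fun s => ψ s p.2)) p.1
        + (deriv (fun s => R s p.2) p.1 / R p.1 p.2) * deriv (fun s => ψ s p.2) p.1
        - deriv (deriv (fun x => ψ p.1 x)) p.2
        - (deriv (fun x => R p.1 x) p.2 / R p.1 p.2)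
          * deriv (fun x => ψ p.1 x) p.2 = 0)
    (hmatch1 : ∀ T : ℝ, 0 ≤ T → T < Real.sqrt (α ^ 2 - r₀ ^ 2) →
      ψ T ρ₀ = Real.log (1 - (T ^ 2 + r₀ ^ 2) / α ^ 2))
    (hmatch2 : ∀ T : ℝ, 0 ≤ T → T < Real.sqrt (α ^ 2 - r₀ ^ 2) →
      deriv (fun x => ψ T x) ρ₀
        = -(2 * r₀ / α ^ 2) * (1 - (T ^ 2 + r₀ ^ 2) / α ^ 2)⁻¹) :
    ∀ T : ℝ, 0 ≤ T → T < Real.sqrt (α ^ 2 - r₀ ^ 2) →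
      (deriv (deriv (fun s => ψ s ρ₀)) T - deriv (deriv (fun x => ψ T x)) ρ₀
          + (deriv (fun s => ψ s ρ₀) T) ^ 2 - (deriv (fun x => ψ T x) ρ₀) ^ 2
          = -2 / (α ^ 2 - T ^ 2 - r₀ ^ 2)) ∧
      ((1 / 2 : ℝ) * (deriv (deriv (fun s => ψ s ρ₀)) T
          - deriv (deriv (fun x => ψ T x)) ρ₀
          + (deriv (fun s => ψ s ρ₀) T) ^ 2 - (deriv (fun x => ψ T x) ρ₀) ^ 2)
          = -1 / (α ^ 2 - T ^ 2 - r₀ ^ 2)) ∧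
      -1 / (α ^ 2 - T ^ 2 - r₀ ^ 2) < 0 := by
  intro T hT0 hTs
  have hα2 : (0:ℝ) < α ^ 2 := by positivity
  have hαne : (α:ℝ) ^ 2 ≠ 0 := ne_of_gt hα2
  have hs0 : 0 < Real.sqrt (α ^ 2 - r₀ ^ 2) := lt_of_le_of_lt hT0 hTs
  have hD : 0 < α ^ 2 - T ^ 2 - r₀ ^ 2 := by
    have := (Real.lt_sqrt hT0).mp hTs; linarith
  have hDne : α ^ 2 - T ^ 2 - r₀ ^ 2 ≠ 0 := ne_of_gt hD
  -- open sets
  have hWopen : IsOpen {t : ℝ | 0 < α ^ 2 - t ^ 2 - r₀ ^ 2} :=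
    isOpen_lt continuous_const ((continuous_const.sub (continuous_pow 2)).sub continuous_const)
  have hVopen : IsOpen {t : ℝ | (t, ρ₀) ∈ U} :=
    hUopen.preimage (continuous_id.prodMk continuous_const)
  have hVsub : Set.Ico (0:ℝ) (Real.sqrt (α ^ 2 - r₀ ^ 2)) ⊆ {t : ℝ | (t, ρ₀) ∈ U} :=
    fun t ht => hseg t ht.1 ht.2
  have hWsub : Set.Ico (0:ℝ) (Real.sqrt (α ^ 2 - r₀ ^ 2)) ⊆
      {t : ℝ | 0 < α ^ 2 - t ^ 2 - r₀ ^ 2} := by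
    intro t ht
    have := (Real.lt_sqrt ht.1).mp ht.2
    simpa using by linarith
  -- the slice f is C² on V
  have hfC2 : ContDiffOn ℝ 2 (fun t => ψ t ρ₀) {t : ℝ | (t, ρ₀) ∈ U} := by
    have hmap : ContDiff ℝ 2 (fun t : ℝ => (t, ρ₀)) := contDiff_id.prodMk contDiff_const
    exact hψ.comp hmap.contDiffOn (fun t ht => ht)
  have hfc1 : ContinuousOn (deriv (fun t => ψ t ρ₀)) {t : ℝ | (t, ρ₀) ∈ U} :=
    hfC2.continuousOn_deriv_of_isOpen hVopen (by norm_num)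
  -- boundary value of the time derivative
  have hgderiv : ∀ t ∈ {t : ℝ | 0 < α ^ 2 - t ^ 2 - r₀ ^ 2},
      HasDerivAt (fun t => Real.log (1 - (t ^ 2 + r₀ ^ 2) / α ^ 2))
        (-2 * t / (α ^ 2 - t ^ 2 - r₀ ^ 2)) t := by
    intro t ht
    have ht' : (0:ℝ) < α ^ 2 - t ^ 2 - r₀ ^ 2 := ht
    have hin : HasDerivAt (fun t : ℝ => 1 - (t ^ 2 + r₀ ^ 2) / α ^ 2) (-(2 * t / α ^ 2)) t := by
      have h1 : HasDerivAt (fun t : ℝ => (t ^ 2 + r₀ ^ 2) / α ^ 2) (2 * t / α ^ 2) t := by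
        have := ((hasDerivAt_pow 2 t).add_const (r₀ ^ 2)).div_const (α ^ 2)
        refine this.congr_deriv ?_
        push_cast; ring
      exact h1.const_sub 1
    have heq : 1 - (t ^ 2 + r₀ ^ 2) / α ^ 2 = (α ^ 2 - t ^ 2 - r₀ ^ 2) / α ^ 2 := by
      field_simp; ring
    have hne : 1 - (t ^ 2 + r₀ ^ 2) / α ^ 2 ≠ 0 := by
      rw [heq]; exact ne_of_gt (div_pos ht' hα2)
    have := hin.log hne
    convert this using 1
    rw [heq]
    field_simp
  have hg1cont : ContinuousOn (fun t => -2 * t / (α ^ 2 - t ^ 2 - r₀ ^ 2))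
      {t : ℝ | 0 < α ^ 2 - t ^ 2 - r₀ ^ 2} := by
    apply ContinuousOn.div (by fun_prop) (by fun_prop)
    exact fun t ht => ne_of_gt ht
  have hfg : ∀ t ∈ Set.Ico (0:ℝ) (Real.sqrt (α ^ 2 - r₀ ^ 2)),
      (fun t => ψ t ρ₀) t = (fun t => Real.log (1 - (t ^ 2 + r₀ ^ 2) / α ^ 2)) t :=
    fun t ht => hmatch1 t ht.1 ht.2
  have hd1 := deriv_eqOn_Ico_aux hVopen hWopen hs0 hVsub hWsub hfc1 hgderiv hg1cont hfg
  have hψT : deriv (fun s => ψ s ρ₀) T = -2 * T / (α ^ 2 - T ^ 2 - r₀ ^ 2) :=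
    hd1 T ⟨hT0, hTs⟩
  -- boundary value of the radial derivative
  have hψρ : deriv (fun x => ψ T x) ρ₀ = -2 * r₀ / (α ^ 2 - T ^ 2 - r₀ ^ 2) := by
    rw [hmatch2 T hT0 hTs]
    have heq : 1 - (T ^ 2 + r₀ ^ 2) / α ^ 2 = (α ^ 2 - T ^ 2 - r₀ ^ 2) / α ^ 2 := by
      field_simp; ring
    rw [heq]
    field_simp
  -- R and its derivatives on the boundary
  have hR0 : R T ρ₀ = r₀ * (α ^ 2 - T ^ 2 - r₀ ^ 2) / α ^ 2 := by
    rw [hR]; field_simp; ring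
  have hRne : R T ρ₀ ≠ 0 := by
    rw [hR0]
    exact ne_of_gt (div_pos (mul_pos hr₀ hD) hα2)
  have hRT : deriv (fun x => R x ρ₀) T = -(2 * r₀ * T) / α ^ 2 := by
    have hfun : (fun x => R x ρ₀)
        = fun x => r₀ * (1 - r₀ ^ 2 / α ^ 2) - r₀ * x ^ 2 / α ^ 2 := by
      funext x; rw [hR]; field_simp; ring
    rw [hfun]
    have h : HasDerivAt (fun x : ℝ => r₀ * (1 - r₀ ^ 2 / α ^ 2) - r₀ * x ^ 2 / α ^ 2)
        (-(2 * r₀ * T) / α ^ 2) T := by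
      have := (((hasDerivAt_pow 2 T).const_mul r₀).div_const (α ^ 2)).const_sub
        (r₀ * (1 - r₀ ^ 2 / α ^ 2))
      refine this.congr_deriv ?_
      push_cast; ring
    exact h.deriv
  have hRρ : deriv (fun x => R T x) ρ₀ = (α ^ 2 - 3 * r₀ ^ 2 - T ^ 2) / α ^ 2 := by
    have hfun : (fun x => R T x)
        = fun ρ => r₀ * (1 - r₀ ^ 2 / α ^ 2) + (1 - 3 * r₀ ^ 2 / α ^ 2) * (ρ - ρ₀)
          - ((T + ρ - ρ₀) ^ 3 - (T - ρ + ρ₀) ^ 3) / (6 * α ^ 2)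
          - r₀ * ((T - ρ + ρ₀) ^ 2 + (T + ρ - ρ₀) ^ 2) / (2 * α ^ 2) := by
      funext x; exact hR T x
    rw [hfun]
    have hu : HasDerivAt (fun ρ : ℝ => T + ρ - ρ₀) 1 ρ₀ := by
      simpa using ((hasDerivAt_id ρ₀).const_add T).sub_const ρ₀
    have hv : HasDerivAt (fun ρ : ℝ => T - ρ + ρ₀) (-1) ρ₀ := by
      simpa using ((hasDerivAt_id ρ₀).const_sub T).add_const ρ₀
    have hB : HasDerivAt (fun ρ : ℝ => (1 - 3 * r₀ ^ 2 / α ^ 2) * (ρ - ρ₀))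
        (1 - 3 * r₀ ^ 2 / α ^ 2) ρ₀ := by
      simpa using ((hasDerivAt_id ρ₀).sub_const ρ₀).const_mul (1 - 3 * r₀ ^ 2 / α ^ 2)
    have htot := ((hB.const_add (r₀ * (1 - r₀ ^ 2 / α ^ 2))).sub
        (((hu.pow 3).sub (hv.pow 3)).div_const (6 * α ^ 2))).sub
        ((((hv.pow 2).add (hu.pow 2)).const_mul r₀).div_const (2 * α ^ 2))
    have h2 : HasDerivAt (fun ρ : ℝ => r₀ * (1 - r₀ ^ 2 / α ^ 2)
          + (1 - 3 * r₀ ^ 2 / α ^ 2) * (ρ - ρ₀)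
          - ((T + ρ - ρ₀) ^ 3 - (T - ρ + ρ₀) ^ 3) / (6 * α ^ 2)
          - r₀ * ((T - ρ + ρ₀) ^ 2 + (T + ρ - ρ₀) ^ 2) / (2 * α ^ 2))
        ((α ^ 2 - 3 * r₀ ^ 2 - T ^ 2) / α ^ 2) ρ₀ := by
      refine htot.congr_deriv ?_
      push_cast
      field_simp
      ring
    exact h2.deriv
  -- wave equation at the boundary point
  have hw : deriv (deriv (fun s => ψ s ρ₀)) T
        + (deriv (fun s => R s ρ₀) T / R T ρ₀) * deriv (fun s => ψ s ρ₀) T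
        - deriv (deriv (fun x => ψ T x)) ρ₀
        - (deriv (fun x => R T x) ρ₀ / R T ρ₀) * deriv (fun x => ψ T x) ρ₀ = 0 :=
    hwave (T, ρ₀) (hseg T hT0 hTs)
  rw [hψT, hψρ, hRT, hRρ, hR0] at hw
  have hmain : deriv (deriv (fun s => ψ s ρ₀)) T - deriv (deriv (fun x => ψ T x)) ρ₀
      + (deriv (fun s => ψ s ρ₀) T) ^ 2 - (deriv (fun x => ψ T x) ρ₀) ^ 2
      = -2 / (α ^ 2 - T ^ 2 - r₀ ^ 2) := by
    rw [hψT, hψρ]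
    have hρρ : deriv (deriv (fun x => ψ T x)) ρ₀
        = deriv (deriv (fun s => ψ s ρ₀)) T
          + (-(2 * r₀ * T) / α ^ 2 / (r₀ * (α ^ 2 - T ^ 2 - r₀ ^ 2) / α ^ 2))
            * (-2 * T / (α ^ 2 - T ^ 2 - r₀ ^ 2))
          - ((α ^ 2 - 3 * r₀ ^ 2 - T ^ 2) / α ^ 2 / (r₀ * (α ^ 2 - T ^ 2 - r₀ ^ 2) / α ^ 2))
            * (-2 * r₀ / (α ^ 2 - T ^ 2 - r₀ ^ 2)) := by linarith
    rw [hρρ]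
    have hr₀ne : r₀ ≠ 0 := ne_of_gt hr₀
    field_simp
    ring
  refine ⟨hmain, ?_, ?_⟩
  · rw [show (1 / 2 : ℝ) * (deriv (deriv (fun s => ψ s ρ₀)) T
        - deriv (deriv (fun x => ψ T x)) ρ₀
        + (deriv (fun s => ψ s ρ₀) T) ^ 2 - (deriv (fun x => ψ T x) ρ₀) ^ 2)
        = (1 / 2 : ℝ) * (-2 / (α ^ 2 - T ^ 2 - r₀ ^ 2)) from by rw [hmain]]
    field_simp
  · exact div_neg_of_neg_of_pos (by norm_num) hD
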